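/- Let 0 < β < 1, θ ≥ 0, γ > 0, π ≥ 0, δ > 0, ρ > 0 satisfy δ(1−β+θ) < ρ < δ(1−β+θ)/(1−β). Set φ := (1−β+θ)/(1−β), δ* := δφ, z̄ := ((δ*+π)/(βγ))^{1/(1−β)}, ū := (ρ − δ(1−β+θ))(1−β)/(δβ(1−β+θ)), g := (δ*−ρ)/β = −[(ρ−δ)(1−β)−δθ]/(β(1−β)), g_h := g/φ. Let c₀, k₀, h₀, μ₀ > 0 satisfy c₀/k₀ = (ρ+π(1−β))/β, ū·h₀^{φ} = z̄·k₀, and ū^β = γ(1−β)k₀^β h₀^{θ−β} c₀^{−β}/(δμ₀). Define c(t) = c₀e^{g t}, k(t) = k₀e^{g t}, u(t) = ū, h(t) = h₀e^{g_h t}, λ(t) = c₀^{−β}e^{([(ρ−δ)(1−β)−δθ]/(1−β))t}, and μ(t) = μ₀·e^{([(ρ−δ)(1−β)−δθ](β−θ)/(β(1−β+θ)))t}. Then for all t: λ = c^{−β}; u^β = γ(1−β)k^β h^{θ−β}·λ/(δμ); k' = γk^β u^{1−β}h^{1−β+θ} − πk − c; h' = δ(1−u)h; λ' = −λγβu^{1−β}k^{β−1}h^{1−β+θ}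 + λ(ρ+π); and μ' = μ(ρ−δ) − (μθδ/(1−β))·u. -/

import Mathlib

lemma exp_rpow' (a b : ℝ) : Real.exp a ^ b = Real.exp (a * b) := by
  rw [Real.rpow_def_of_pos (Real.exp_pos a), Real.log_exp]

lemma deriv_const_mul_exp' (a b t : ℝ) :
    deriv (fun s => a * Real.exp (b * s)) t = a * b * Real.exp (b * t) := by
  have h : HasDerivAt (fun s => a * Real.exp (b * s))
      (a * (Real.exp (b * t) * (b * 1))) t :=
    (((hasDerivAt_id t).const_mul b).exp).const_mul a
  rw [h.deriv]; ring

/-- The first closed-form solution (Ruiz-Tamarit solution) of the Lucas-Uzawa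
model with externalities in the case σ = β satisfies all first-order conditions
of the original model. -/
theorem sigma_eq_beta_first_solution (β θ γ pi δ ρ : ℝ)
    (hβ0 : 0 < β) (hβ1 : β < 1) (hθ : 0 ≤ θ) (hγ : 0 < γ) (hpi : 0 ≤ pi)
    (hδ : 0 < δ) (hρ : 0 < ρ)
    (hρ1 : δ * (1 - β + θ) < ρ) (hρ2 : ρ < δ * (1 - β + θ) / (1 - β))
    (φ δs zbar ubar g gh : ℝ)
    (hφ : φ = (1 - β + θ) / (1 - β)) (hδs : δs = δ * φ)
    (hzbar : zbar = ((δs + pi) / (β * γ)) ^ (1 / (1 - β)))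
    (hubar : ubar = (ρ - δ * (1 - β + θ)) * (1 - β) / (δ * β * (1 - β + θ)))
    (hg : g = (δs - ρ) / β) (hgh : gh = g / φ)
    (c0 k0 h0 μ0 : ℝ)
    (hc0 : 0 < c0) (hk0 : 0 < k0) (hh0 : 0 < h0) (hμ0 : 0 < μ0)
    (hck : c0 / k0 = (ρ + pi * (1 - β)) / β)
    (huh : ubar * h0 ^ φ = zbar * k0)
    (hfoc0 : ubar ^ β = γ * (1 - β) * k0 ^ β * h0 ^ (θ - β) * c0 ^ (-β) / (δ * μ0))
    (c k u h lam μ : ℝ → ℝ)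
    (hc : ∀ t, c t = c0 * Real.exp (g * t))
    (hk : ∀ t, k t = k0 * Real.exp (g * t))
    (hu : ∀ t, u t = ubar)
    (hh : ∀ t, h t = h0 * Real.exp (gh * t))
    (hlam : ∀ t, lam t = c0 ^ (-β)
      * Real.exp (((ρ - δ) * (1 - β) - δ * θ) / (1 - β) * t))
    (hμ : ∀ t, μ t = μ0
      * Real.exp (((ρ - δ) * (1 - β) - δ * θ) * (β - θ) / (β * (1 - β + θ)) * t)) :
    (∀ t, lam t = c t ^ (-β)) ∧
    (∀ t, u t ^ β = γ * (1 - β) * k t ^ β * h t ^ (θ - β) * lam t / (δ * μ t)) ∧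
    (∀ t, deriv k t
      = γ * k t ^ β * u t ^ (1 - β) * h t ^ (1 - β + θ) - pi * k t - c t) ∧
    (∀ t, deriv h t = δ * (1 - u t) * h t) ∧
    (∀ t, deriv lam t
      = -(lam t) * γ * β * u t ^ (1 - β) * k t ^ (β - 1) * h t ^ (1 - β + θ)
        + lam t * (ρ + pi)) ∧
    (∀ t, deriv μ t = μ t * (ρ - δ) - μ t * θ * δ / (1 - β) * u t) := by
  have hβ' : (0:ℝ) < 1 - β := by linarith
  have hβθ : (0:ℝ) < 1 - β + θ := by linarith
  have hφpos : 0 < φ := by rw [hφ]; positivity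
  have hδspos : 0 < δs := by rw [hδs]; positivity
  have hubarpos : 0 < ubar := by
    rw [hubar]; apply div_pos (by nlinarith) (by positivity)
  have hδs' : δs * (1 - β) = δ * (1 - β + θ) := by
    rw [hδs, hφ]; field_simp
  have hgβ : β * g = δs - ρ := by rw [hg]; field_simp
  have hLexp : ((ρ - δ) * (1 - β) - δ * θ) / (1 - β) = -(β * g) := by
    rw [div_eq_iff hβ'.ne', hgβ]; linear_combination hδs'
  have hghφ : gh * (1 - β + θ) = (1 - β) * g := by
    rw [hgh, hφ]; field_simp
  have hghval : gh * (β * (1 - β + θ)) = (δs - ρ) * (1 - β) := by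
    linear_combination β * hghφ + (1 - β) * hgβ
  have hMexp : ((ρ - δ) * (1 - β) - δ * θ) * (β - θ) / (β * (1 - β + θ)) = (θ - β) * gh := by
    rw [div_eq_iff (by positivity)]
    linear_combination (β - θ) * hghval + (β - θ) * hδs'
  have hubar' : ubar * (δ * β * (1 - β + θ)) = (ρ - δ * (1 - β + θ)) * (1 - β) := by
    rw [hubar]; field_simp
  have hgh_eq : gh = δ * (1 - ubar) := by
    have h2 : gh * (β * (1 - β + θ)) = (δ * (1 - ubar)) * (β * (1 - β + θ)) := by
      linear_combination hghval + hubar' + hδs'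
    exact mul_right_cancel₀ (by positivity) h2
  have hc0k : c0 * β = k0 * (ρ + pi * (1 - β)) := by
    have h3 := hck
    field_simp at h3
    linarith [h3]
  have hu2 : θ * δ / (1 - β) * ubar * (β * (1 - β + θ)) = θ * (ρ - δ * (1 - β + θ)) := by
    rw [hubar]; field_simp
  have hMexp2 : ((ρ - δ) * (1 - β) - δ * θ) * (β - θ) / (β * (1 - β + θ))
      = (ρ - δ) - θ * δ / (1 - β) * ubar := by
    rw [div_eq_iff (by positivity : (β * (1 - β + θ)) ≠ 0)]
    linear_combination hu2
  have hφβ : φ * (1 - β) = 1 - β + θ := by rw [hφ]; field_simp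
  have hA : ubar ^ (1 - β) * h0 ^ (1 - β + θ) = (δs + pi) / (β * γ) * k0 ^ (1 - β) := by
    have h1 : (ubar * h0 ^ φ) ^ (1 - β) = (zbar * k0) ^ (1 - β) := by rw [huh]
    rw [Real.mul_rpow hubarpos.le (Real.rpow_nonneg hh0.le φ),
        ← Real.rpow_mul hh0.le, hφβ, Real.mul_rpow (by rw [hzbar]; positivity) hk0.le,
        hzbar, ← Real.rpow_mul (by positivity), one_div,
        inv_mul_cancel₀ hβ'.ne', Real.rpow_one] at h1
    exact h1
  have hB : γ * k0 ^ β * ubar ^ (1 - β) * h0 ^ (1 - β + θ) = (δs + pi) / β * k0 := by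
    rw [mul_assoc, hA,
      show γ * k0 ^ β * ((δs + pi) / (β * γ) * k0 ^ (1 - β))
        = (δs + pi) / β * (k0 ^ β * k0 ^ (1 - β)) * (γ / γ) by ring,
      div_self hγ.ne', ← Real.rpow_add hk0]
    norm_num
  have hC : γ * ubar ^ (1 - β) * k0 ^ (β - 1) * h0 ^ (1 - β + θ) = (δs + pi) / β := by
    rw [show γ * ubar ^ (1-β) * k0 ^ (β-1) * h0 ^ (1-β+θ)
        = γ * (ubar ^ (1-β) * h0 ^ (1-β+θ)) * k0 ^ (β-1) by ring, hA,
      show γ * ((δs + pi) / (β * γ) * k0 ^ (1-β)) * k0 ^ (β-1)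
        = (δs + pi) / β * (k0 ^ (1-β) * k0 ^ (β-1)) * (γ / γ) by ring,
      div_self hγ.ne', ← Real.rpow_add hk0]
    norm_num
  have hBβ : γ * k0 ^ β * ubar ^ (1 - β) * h0 ^ (1 - β + θ) * β = (δs + pi) * k0 := by
    rw [hB]; field_simp
  have hCβ : γ * ubar ^ (1 - β) * k0 ^ (β - 1) * h0 ^ (1 - β + θ) * β = δs + pi := by
    rw [hC]; field_simp
  refine ⟨?_, ?_, ?_, ?_, ?_, ?_⟩
  · -- λ = c^(-β)
    intro t
    rw [hlam t, hc t, Real.mul_rpow hc0.le (Real.exp_pos _).le, exp_rpow', hLexp,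
      show g * t * (-β) = -(β * g) * t by ring]
  · -- static FOC
    intro t
    rw [hu t, hk t, hh t, hlam t, hμ t, hLexp, hMexp,
      Real.mul_rpow hk0.le (Real.exp_pos _).le,
      Real.mul_rpow hh0.le (Real.exp_pos _).le, exp_rpow', exp_rpow',
      show g * t * β = β * g * t by ring,
      show gh * t * (θ - β) = (θ - β) * gh * t by ring,
      show -(β * g) * t = -(β * g * t) by ring, Real.exp_neg, hfoc0]
    have e1 := Real.exp_ne_zero (β * g * t)
    have e2 := Real.exp_ne_zero ((θ - β) * gh * t)
    field_simp
  · -- k'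
    intro t
    rw [show deriv k t = k0 * g * Real.exp (g * t) by
        rw [funext hk]; exact deriv_const_mul_exp' _ _ _,
      hk t, hu t, hh t, hc t,
      Real.mul_rpow hk0.le (Real.exp_pos _).le,
      Real.mul_rpow hh0.le (Real.exp_pos _).le, exp_rpow', exp_rpow',
      show g * t * β = β * g * t by ring,
      show gh * t * (1 - β + θ) = (1 - β) * g * t by linear_combination t * hghφ]
    have hXX : Real.exp (β * g * t) * Real.exp ((1 - β) * g * t) = Real.exp (g * t) := by
      rw [← Real.exp_add]; congr 1; ring
    have key : γ * (k0 ^ β * Real.exp (β * g * t)) * ubar ^ (1 - β)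
        * (h0 ^ (1 - β + θ) * Real.exp ((1 - β) * g * t))
        = (δs + pi) / β * k0 * Real.exp (g * t) := by
      rw [show γ * (k0 ^ β * Real.exp (β * g * t)) * ubar ^ (1 - β)
          * (h0 ^ (1 - β + θ) * Real.exp ((1 - β) * g * t))
          = γ * k0 ^ β * ubar ^ (1 - β) * h0 ^ (1 - β + θ)
            * (Real.exp (β * g * t) * Real.exp ((1 - β) * g * t)) by ring, hXX, hB]
    rw [key]
    field_simp
    linear_combination k0 * hgβ + hc0k
  · -- h'
    intro t
    rw [show deriv h t = h0 * gh * Real.exp (gh * t) by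
        rw [funext hh]; exact deriv_const_mul_exp' _ _ _,
      hu t, hh t, hgh_eq]
    ring
  · -- λ'
    intro t
    have hlf : lam = fun s => c0 ^ (-β) * Real.exp (-(β * g) * s) := by
      funext s; rw [hlam s, hLexp]
    rw [show deriv lam t = c0 ^ (-β) * (-(β * g)) * Real.exp (-(β * g) * t) by
        rw [hlf]; exact deriv_const_mul_exp' _ _ _,
      hlam t, hLexp, hu t, hk t, hh t,
      Real.mul_rpow hk0.le (Real.exp_pos _).le,
      Real.mul_rpow hh0.le (Real.exp_pos _).le, exp_rpow', exp_rpow',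
      show g * t * (β - 1) = (β - 1) * g * t by ring,
      show gh * t * (1 - β + θ) = (1 - β) * g * t by linear_combination t * hghφ]
    have hXX2 : Real.exp ((β - 1) * g * t) * Real.exp ((1 - β) * g * t) = 1 := by
      rw [← Real.exp_add, show (β-1)*g*t + (1-β)*g*t = 0 by ring, Real.exp_zero]
    linear_combination (c0 ^ (-β) * Real.exp (-(β * g) * t)
        * γ * ubar ^ (1 - β) * k0 ^ (β - 1) * h0 ^ (1 - β + θ) * β) * hXX2
      + (c0 ^ (-β) * Real.exp (-(β * g) * t)) * hCβ
      - (c0 ^ (-β) * Real.exp (-(β * g) * t)) * hgβ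
  · -- μ'
    intro t
    rw [show deriv μ t = μ0 * (((ρ - δ) * (1 - β) - δ * θ) * (β - θ) / (β * (1 - β + θ)))
          * Real.exp (((ρ - δ) * (1 - β) - δ * θ) * (β - θ) / (β * (1 - β + θ)) * t) by
        rw [funext hμ]; exact deriv_const_mul_exp' _ _ _,
      hμ t, hu t, hMexp2]
    ring
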